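/- Let 𝔰₀ ⊆ V(ℂ²) be the type (II)₀ realization of sl(2,ℂ), spanned by X = exp(x)∂_y, Y = exp(−x)(y∂_x + (y²/2)∂_y), H = [X,Y] = ∂_x, let 2d be a nonnegative integer and V = exp(dx)(∂_x + y∂_y). Then the 𝔰₀-invariant subspace of V(ℂ²) generated by V is the span of (ad Y)ⁿ(V) for 0 ≤ n ≤ 2d, and it is an abelian Lie subalgebra of V(ℂ²). -/

import Mathlib

open Complex Module Set

set_option synthInstance.maxHeartbeats 1000000
set_option maxHeartbeats 1000000

noncomputable section

/-- The algebra of entire (holomorphic) functions on `ℂ²`. -/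
def Entire : Subalgebra ℂ (ℂ × ℂ → ℂ) where
  carrier := {f | AnalyticOnNhd ℂ f Set.univ}
  mul_mem' hf hg := hf.mul hg
  add_mem' hf hg := hf.add hg
  one_mem' := analyticOnNhd_const
  zero_mem' := analyticOnNhd_const
  algebraMap_mem' _ := analyticOnNhd_const

/-- The Lie algebra `V(ℂ²)` of holomorphic vector fields on `ℂ²`, i.e. derivations
`F(x,y)∂ₓ + G(x,y)∂_y` of the ℂ-algebra of entire functions on `ℂ²`, with bracket the
commutator of derivations. -/
abbrev VF := Derivation ℂ Entire Entire

instance (M : Submodule ℂ VF) : AddCommGroup ↥M := @Submodule.addCommGroup ℂ VF _ _ _ M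

/- Shortcut instances, to speed up elaboration. -/
@[reducible] instance (priority := 10000) : AddCommMonoid Entire := inferInstance
instance (priority := 10000) : SMulCommClass ℂ Entire Entire := inferInstance
@[reducible] instance (priority := 10000) : SMul Entire VF := inferInstance
@[reducible] instance (priority := 10000) : SMul ℂ VF := inferInstance
@[reducible] instance (priority := 10000) : LieRing VF := inferInstance
@[reducible] instance (priority := 10000) : AddCommGroup VF := inferInstance

theorem Entire.diffAt (f : Entire) (p : ℂ × ℂ) : DifferentiableAt ℂ (f : ℂ × ℂ → ℂ) p :=
  (f.2 p trivial).differentiableAt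

theorem Entire.fderiv_mem {f : ℂ × ℂ → ℂ} (hf : f ∈ Entire) (v : ℂ × ℂ) :
    (fun p => fderiv ℂ f p v) ∈ Entire := fun p _ =>
  ((ContinuousLinearMap.apply ℂ ℂ v).analyticAt _).comp ((hf.fderiv) p trivial)

/-- The constant-coefficient vector field in the direction `v`. -/
def Dvec (v : ℂ × ℂ) : VF where
  toFun f := ⟨fun p => fderiv ℂ (f : ℂ × ℂ → ℂ) p v, Entire.fderiv_mem f.2 v⟩
  map_add' f g := Subtype.ext <| funext fun p => by
    show fderiv ℂ ((f : ℂ × ℂ → ℂ) + (g : ℂ × ℂ → ℂ)) p v = _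
    rw [fderiv_add (Entire.diffAt f p) (Entire.diffAt g p)]
    rfl
  map_smul' c f := Subtype.ext <| funext fun p => by
    show fderiv ℂ (c • (f : ℂ × ℂ → ℂ)) p v = _
    rw [fderiv_const_smul (Entire.diffAt f p) c]
    rfl
  map_one_eq_zero' := Subtype.ext <| funext fun p => by
    show fderiv ℂ (fun _ => (1 : ℂ)) p v = 0
    rw [fderiv_const_apply]
    rfl
  leibniz' f g := Subtype.ext <| funext fun p => by
    show fderiv ℂ (fun q => (f : ℂ × ℂ → ℂ) q * (g : ℂ × ℂ → ℂ) q) p v = _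
    rw [fderiv_fun_mul (Entire.diffAt f p) (Entire.diffAt g p)]
    show (f : ℂ × ℂ → ℂ) p • fderiv ℂ (g : ℂ × ℂ → ℂ) p v
      + (g : ℂ × ℂ → ℂ) p • fderiv ℂ (f : ℂ × ℂ → ℂ) p v = _
    rfl

/-- The coordinate vector field `∂ₓ`. -/
def Dx : VF := Dvec (1, 0)

/-- The coordinate vector field `∂_y`. -/
def Dy : VF := Dvec (0, 1)

/-- The entire function `exp (c·x)`. -/
def ex (c : ℂ) : Entire :=
  ⟨fun p => Complex.exp (c * p.1), fun p _ =>
    analyticAt_cexp.comp ((analyticAt_const (v := c)).mul (analyticAt_fst (p := p)))⟩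

/-- The entire function `y` (the second coordinate). -/
def yc : Entire := ⟨fun p => p.2, fun _ _ => analyticAt_snd⟩

/-- The entire function `f(y)` built from an entire function `f` of one variable. -/
def ofY (f : ℂ → ℂ) (hf : AnalyticOnNhd ℂ f Set.univ) : Entire :=
  ⟨fun p => f p.2, fun p _ => (hf p.2 trivial).comp analyticAt_snd⟩

/-- The smallest `s`-invariant subspace of `V(ℂ²)` containing `v`. -/
def invSpan (s : LieSubalgebra ℂ VF) (v : VF) : Submodule ℂ VF :=
  sInf {W : Submodule ℂ VF | v ∈ W ∧ ∀ S ∈ s, ∀ w ∈ W, ⁅S, w⁆ ∈ W}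

/-- `X = exp(x)∂_y`, the first generator of the type (II) realization of `sl(2,ℂ)`. -/
def Xb : VF := ex 1 • Dy

/-- `Y = exp(−x)(y∂ₓ + (y²/2 + ε)∂_y)`, the second generator of the type (II)_ε realization
of `sl(2,ℂ)`. -/
def Yb (ε : ℂ) : VF :=
  (ex (-1) * yc) • Dx + (ex (-1) * (((1 : ℂ) / 2) • yc ^ 2 + algebraMap ℂ Entire ε)) • Dy

/-- The type (II)_ε realization of `sl(2,ℂ)` in `V(ℂ²)`: the span of `X = exp(x)∂_y`,
`Y = exp(−x)(y∂ₓ + (y²/2 + ε)∂_y)` and `H = [X,Y]`. -/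
def typeII (ε : ℂ) : LieSubalgebra ℂ VF := LieSubalgebra.lieSpan ℂ VF {Xb, Yb ε, ⁅Xb, Yb ε⁆}

/-- `H = [X,Y]` for the type (II)_ε realization. -/
def Hb (ε : ℂ) : VF := ⁅Xb, Yb ε⁆

/-- The vector field `W = ∂ₓ + y∂_y`. -/
def Wvf : VF := Dx + yc • Dy

/-- The vector field `exp(dx)(∂ₓ + y∂_y)`. -/
def Vvf (d : ℂ) : VF := ex d • (Dx + yc • Dy)

/-- The vector field `exp(dx)∂_y`. -/
def Evf (d : ℂ) : VF := ex d • Dy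

/-- The vector field `exp(dx)(∂ₓ + (y + ℓ)∂_y)`. -/
def Vlvf (d l : ℂ) : VF := ex d • (Dx + (yc + algebraMap ℂ Entire l) • Dy)

section Foundations

theorem Entire.fderiv_diffAt (f : Entire) (p : ℂ × ℂ) :
    DifferentiableAt ℂ (fderiv ℂ (f : ℂ × ℂ → ℂ)) p :=
  ((f.2.fderiv) p trivial).differentiableAt

theorem Dvec_apply (v : ℂ × ℂ) (f : Entire) (p : ℂ × ℂ) :
    (Dvec v f : ℂ × ℂ → ℂ) p = fderiv ℂ (f : ℂ × ℂ → ℂ) p v := rfl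

/-- Clairaut: constant vector fields commute. -/
theorem lie_Dvec (v w : ℂ × ℂ) : ⁅Dvec v, Dvec w⁆ = (0 : VF) := by
  ext f p
  rw [Derivation.commutator_apply]
  have hd : DifferentiableAt ℂ (fderiv ℂ (f : ℂ × ℂ → ℂ)) p := Entire.fderiv_diffAt f p
  have key : ∀ a b : ℂ × ℂ,
      fderiv ℂ (fun q => fderiv ℂ (f : ℂ × ℂ → ℂ) q b) p a
        = fderiv ℂ (fderiv ℂ (f : ℂ × ℂ → ℂ)) p a b := by
    intro a b
    have : (fun q => fderiv ℂ (f : ℂ × ℂ → ℂ) q b)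
        = (ContinuousLinearMap.apply ℂ ℂ b) ∘ (fderiv ℂ (f : ℂ × ℂ → ℂ)) := rfl
    rw [this, fderiv_comp (x := p) ((ContinuousLinearMap.apply ℂ ℂ b).differentiableAt) hd,
      ContinuousLinearMap.fderiv]
    rfl
  have hsymm : IsSymmSndFDerivAt ℂ (f : ℂ × ℂ → ℂ) p :=
    ((f.2 p trivial).contDiffAt (n := 2)).isSymmSndFDerivAt (by simp [minSmoothness_of_isRCLikeNormedField])
  show ((Dvec v (Dvec w f)) : ℂ × ℂ → ℂ) p - ((Dvec w (Dvec v f)) : ℂ × ℂ → ℂ) p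
      = ((0 : VF) f : ℂ × ℂ → ℂ) p
  rw [Dvec_apply, Dvec_apply]
  show fderiv ℂ (fun q => fderiv ℂ (f : ℂ × ℂ → ℂ) q w) p v
      - fderiv ℂ (fun q => fderiv ℂ (f : ℂ × ℂ → ℂ) q v) p w
      = ((0 : VF) f : ℂ × ℂ → ℂ) p
  rw [key v w, key w v, hsymm v w, sub_self]
  rfl

end Foundations

section SmulAlgebra

theorem VF.smul_apply (g : Entire) (D : VF) (f : Entire) : (g • D) f = g * D f := rfl

theorem lie_smul_right (D E : VF) (f : Entire) : ⁅D, f • E⁆ = (D f) • E + f • ⁅D, E⁆ := by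
  ext g
  simp only [Derivation.commutator_apply, VF.smul_apply, Derivation.add_apply,
    Derivation.leibniz, smul_eq_mul]
  ring

theorem lie_smul_smul (f g : Entire) (D E : VF) :
    ⁅f • D, g • E⁆ = (f * D g) • E - (g * E f) • D + (f * g) • ⁅D, E⁆ := by
  ext h
  simp only [Derivation.commutator_apply, VF.smul_apply, Derivation.add_apply,
    Derivation.sub_apply, Derivation.leibniz, smul_eq_mul]
  ring

theorem smul_smul_VF (c : ℂ) (f : Entire) (D : VF) : c • (f • D) = (c • f) • D :=
  (smul_assoc c f D).symm

end SmulAlgebra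

section DerivFacts

theorem Dx_ex (c : ℂ) : Dx (ex c) = c • ex c := by
  ext p
  have h1 : HasFDerivAt (fun q : ℂ × ℂ => c * q.1) (c • ContinuousLinearMap.fst ℂ ℂ ℂ) p := by
    exact ((ContinuousLinearMap.fst ℂ ℂ ℂ).hasFDerivAt (x := p)).const_smul c
  have h2 : HasFDerivAt (fun q : ℂ × ℂ => Complex.exp (c * q.1))
      (Complex.exp (c * p.1) • (c • ContinuousLinearMap.fst ℂ ℂ ℂ)) p :=
    (Complex.hasDerivAt_exp (c * p.1)).comp_hasFDerivAt p h1
  show fderiv ℂ (fun q : ℂ × ℂ => Complex.exp (c * q.1)) p (1, 0) = (c • ex c : Entire).1 p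
  rw [h2.fderiv]
  show Complex.exp (c * p.1) * (c * (1, (0:ℂ)).1) = c * Complex.exp (c * p.1)
  ring

theorem Dy_ex (c : ℂ) : Dy (ex c) = 0 := by
  ext p
  have h1 : HasFDerivAt (fun q : ℂ × ℂ => c * q.1) (c • ContinuousLinearMap.fst ℂ ℂ ℂ) p := by
    exact ((ContinuousLinearMap.fst ℂ ℂ ℂ).hasFDerivAt (x := p)).const_smul c
  have h2 : HasFDerivAt (fun q : ℂ × ℂ => Complex.exp (c * q.1))
      (Complex.exp (c * p.1) • (c • ContinuousLinearMap.fst ℂ ℂ ℂ)) p :=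
    (Complex.hasDerivAt_exp (c * p.1)).comp_hasFDerivAt p h1
  show fderiv ℂ (fun q : ℂ × ℂ => Complex.exp (c * q.1)) p (0, 1) = 0
  rw [h2.fderiv]
  show Complex.exp (c * p.1) * (c * ((0:ℂ), (1:ℂ)).1) = 0
  simp

theorem Dx_yc : Dx yc = 0 := by
  ext p
  show fderiv ℂ (fun q : ℂ × ℂ => q.2) p (1, 0) = 0
  rw [fderiv_snd]
  rfl

theorem Dy_yc : Dy yc = 1 := by
  ext p
  show fderiv ℂ (fun q : ℂ × ℂ => q.2) p (0, 1) = (1 : Entire).1 p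
  rw [fderiv_snd]
  rfl

theorem ex_mul (a b : ℂ) : ex a * ex b = ex (a + b) := by
  apply Subtype.ext; funext p
  show Complex.exp (a * p.1) * Complex.exp (b * p.1) = Complex.exp ((a + b) * p.1)
  rw [← Complex.exp_add]; ring_nf

theorem ex_zero : ex 0 = 1 := by
  apply Subtype.ext; funext p
  show Complex.exp (0 * p.1) = 1
  simp

end DerivFacts

section PB

/-- `P a k = exp(ax) yᵏ`. -/
def P (a : ℂ) (k : ℕ) : Entire := ex a * yc ^ k

/-- `B a k = exp(ax) yᵏ (∂ₓ + y ∂_y)`. -/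
def B (a : ℂ) (k : ℕ) : VF := P a k • Dx + P a (k + 1) • Dy

theorem P_mul (a b : ℂ) (k l : ℕ) : P a k * P b l = P (a + b) (k + l) := by
  unfold P
  rw [mul_mul_mul_comm, ex_mul, pow_add]

theorem yc_mul_P (a : ℂ) (k : ℕ) : yc * P a k = P a (k + 1) := by
  unfold P
  rw [pow_succ]; ring

theorem Dx_P (a : ℂ) (k : ℕ) : Dx (P a k) = a • P a k := by
  unfold P
  rw [Derivation.leibniz, Derivation.leibniz_pow, Dx_yc, Dx_ex]
  simp only [smul_zero, smul_eq_mul, mul_zero, zero_add, Algebra.mul_smul_comm, smul_smul]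
  rw [mul_comm (yc ^ k)]

theorem Dy_P_succ (a : ℂ) (k : ℕ) : Dy (P a (k + 1)) = ((k + 1 : ℕ) : ℂ) • P a k := by
  unfold P
  rw [Derivation.leibniz, Derivation.leibniz_pow, Dy_yc, Dy_ex]
  simp only [smul_eq_mul, mul_one, mul_zero, add_zero, Nat.add_sub_cancel]
  rw [← Nat.cast_smul_eq_nsmul ℂ (k+1), Algebra.mul_smul_comm]

theorem Dy_P_zero (a : ℂ) : Dy (P a 0) = 0 := by
  unfold P
  rw [pow_zero, mul_one, Dy_ex]

theorem yc_mul_Dy_P (a : ℂ) (k : ℕ) : yc * Dy (P a k) = (k : ℂ) • P a k := by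
  cases k with
  | zero => rw [Dy_P_zero]; simp
  | succ m =>
      rw [Dy_P_succ, Algebra.mul_smul_comm, yc_mul_P]

theorem P_mul_Dy (b : ℂ) (l : ℕ) (a : ℂ) (k : ℕ) :
    P b (l + 1) * Dy (P a k) = (k : ℂ) • P (a + b) (k + l) := by
  rw [← yc_mul_P, mul_comm yc (P b l), mul_assoc, yc_mul_Dy_P, Algebra.mul_smul_comm, P_mul,
    add_comm b a, add_comm l k]

theorem coeff_ext {F G F' G' : Entire} (h1 : F = F') (h2 : G = G') :
    F • Dx + G • Dy = F' • Dx + G' • Dy := by rw [h1, h2]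

/-- Master formula for the bracket of two vector fields. -/
theorem lie_fields (F G F' G' : Entire) :
    ⁅F • Dx + G • Dy, F' • Dx + G' • Dy⁆
      = (F * Dx F' + G * Dy F' - F' * Dx F - G' * Dy F) • Dx
        + (F * Dx G' + G * Dy G' - F' * Dx G - G' * Dy G) • Dy := by
  have hxy : ⁅Dx, Dy⁆ = (0 : VF) := lie_Dvec _ _
  have hyx : ⁅Dy, Dx⁆ = (0 : VF) := lie_Dvec _ _
  have hxx : ⁅Dx, Dx⁆ = (0 : VF) := lie_Dvec _ _
  have hyy : ⁅Dy, Dy⁆ = (0 : VF) := lie_Dvec _ _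
  rw [add_lie, lie_add, lie_add, lie_smul_smul, lie_smul_smul, lie_smul_smul, lie_smul_smul,
    hxy, hyx, hxx, hyy]
  simp only [smul_zero, add_zero, sub_smul, add_smul]
  abel

end PB

theorem Yb0_eq : Yb 0 = P (-1) 1 • Dx + ((1/2 : ℂ) • P (-1) 2) • Dy := by
  unfold Yb P
  rw [map_zero, add_zero, pow_one, Algebra.mul_smul_comm]

theorem P_mul_Dy2 (b a : ℂ) (k : ℕ) : P b 2 * Dy (P a k) = (k : ℂ) • P (a + b) (k + 1) :=
  P_mul_Dy b 1 a k

theorem L1 (a : ℂ) (k : ℕ) :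
    ⁅Yb 0, B a k⁆ = (a + k / 2) • B (a - 1) (k + 1) := by
  rw [Yb0_eq]
  unfold B
  rw [lie_fields, smul_add, smul_smul_VF, smul_smul_VF]
  apply coeff_ext <;>
  · simp only [Derivation.map_smul, Dx_P, Dy_P_succ, smul_mul_assoc, P_mul_Dy2,
      Algebra.mul_smul_comm, Algebra.smul_mul_assoc, P_mul, smul_smul]
    ring_nf
    match_scalars <;> push_cast <;> ring


theorem Xb_eq : Xb = (0 : Entire) • Dx + P 1 0 • Dy := by
  unfold Xb P
  rw [pow_zero, mul_one, zero_smul, zero_add]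

theorem zero_VF : (0 : VF) = (0 : Entire) • Dx + (0 : Entire) • Dy := by simp

theorem L2a (a : ℂ) : ⁅Xb, B a 0⁆ = 0 := by
  rw [Xb_eq, zero_VF]
  unfold B
  rw [lie_fields]
  apply coeff_ext <;>
  · simp only [Derivation.map_smul, Dx_P, Dy_P_succ, Dy_P_zero, smul_mul_assoc, P_mul_Dy2,
      Algebra.mul_smul_comm, Algebra.smul_mul_assoc, P_mul, smul_smul, zero_mul, mul_zero,
      zero_smul, zero_add, add_zero, zero_sub, sub_zero, map_zero, smul_zero]
    try ring_nf

theorem L4 : Hb 0 = Dx := by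
  have hP00 : P 0 0 = 1 := by unfold P; rw [pow_zero, mul_one, ex_zero]
  have h : ⁅Xb, Yb 0⁆ = P 0 0 • Dx + (0 : Entire) • Dy := by
    rw [Xb_eq, Yb0_eq, lie_fields]
    apply coeff_ext <;>
    · simp only [Derivation.map_smul, Dx_P, Dy_P_succ, Dy_P_zero, smul_mul_assoc, P_mul_Dy2,
        Algebra.mul_smul_comm, Algebra.smul_mul_assoc, P_mul, smul_smul, zero_mul, mul_zero,
        zero_smul, zero_add, add_zero, zero_sub, sub_zero, smul_zero, map_zero]
      try ring_nf
      try match_scalars <;> norm_num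
  show ⁅Xb, Yb 0⁆ = Dx
  rw [h, hP00, one_smul, zero_smul, add_zero]

theorem L2b (a : ℂ) (k : ℕ) :
    ⁅Xb, B a (k + 1)⁆ = ((k + 1 : ℕ) : ℂ) • B (a + 1) k := by
  rw [Xb_eq]
  unfold B
  rw [lie_fields, smul_add, smul_smul_VF, smul_smul_VF]
  apply coeff_ext <;>
  · simp only [Derivation.map_smul, Dx_P, Dy_P_succ, Dy_P_zero, smul_mul_assoc, P_mul_Dy2,
      Algebra.mul_smul_comm, Algebra.smul_mul_assoc, P_mul, smul_smul, zero_mul, mul_zero,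
      zero_smul, zero_add, add_zero, zero_sub, sub_zero, smul_zero, map_zero]
    try ring_nf
    try match_scalars <;> push_cast <;> ring

theorem L3 (a : ℂ) (k : ℕ) : ⁅Dx, B a k⁆ = a • B a k := by
  have h1 : (1 : Entire) • Dx + (0 : Entire) • Dy = Dx := by simp
  rw [← h1]
  unfold B
  rw [lie_fields, smul_add, smul_smul_VF, smul_smul_VF]
  apply coeff_ext <;>
  · simp only [Derivation.map_smul, Dx_P, Dy_P_succ, Dy_P_zero, smul_mul_assoc,
      Algebra.mul_smul_comm, Algebra.smul_mul_assoc, P_mul, smul_smul, zero_mul, mul_zero,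
      zero_smul, zero_add, add_zero, zero_sub, sub_zero, map_one, map_zero, one_mul, mul_one,
      Derivation.map_one_eq_zero, smul_zero]
    try ring_nf
    try match_scalars <;> push_cast <;> ring

theorem L5 (a b : ℂ) (j k : ℕ) (h : a + (j : ℂ) = b + (k : ℂ)) :
    ⁅B a j, B b k⁆ = 0 := by
  rw [zero_VF]
  unfold B
  rw [lie_fields]
  apply coeff_ext <;>
  · simp only [Derivation.map_smul, Dx_P, Dy_P_succ, P_mul_Dy, smul_mul_assoc,
      Algebra.mul_smul_comm, Algebra.smul_mul_assoc, P_mul, smul_smul]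
    ring_nf
    match_scalars <;> push_cast <;>
      first
        | linear_combination h
        | linear_combination (-2 : ℂ) * h
        | linear_combination (2 : ℂ) * h
        | linear_combination (-1 : ℂ) * h
        | ring

/-- The scalar coefficients `∏_{j<k} (n-j)/2`. -/
def cc (n k : ℕ) : ℂ := ∏ j ∈ Finset.range k, (((n : ℂ) - j) / 2)

theorem cc_zero (n : ℕ) : cc n 0 = 1 := Finset.prod_range_zero _

theorem cc_succ (n k : ℕ) : cc n (k + 1) = cc n k * (((n : ℂ) - k) / 2) :=
  Finset.prod_range_succ _ _

theorem cc_top (n : ℕ) : cc n (n + 1) = 0 :=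
  Finset.prod_eq_zero (Finset.self_mem_range_succ n) (by simp)

theorem Vvf_eq_B (d : ℂ) : Vvf d = B d 0 := by
  unfold Vvf B P
  rw [smul_add, smul_smul, pow_zero, pow_one, mul_one]

theorem adY_pow (n k : ℕ) :
    ((LieAlgebra.ad ℂ VF (Yb 0)) ^ k) (Vvf ((n : ℂ) / 2))
      = cc n k • B ((n : ℂ) / 2 - k) k := by
  induction k with
  | zero =>
      rw [pow_zero, Module.End.one_apply, cc_zero, one_smul, Vvf_eq_B]
      norm_num
  | succ k ih =>
      rw [pow_succ', Module.End.mul_apply, LieAlgebra.ad_apply, ih, lie_smul, L1]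
      have harg : ((n : ℂ) / 2 - (k : ℂ) - 1) = ((n : ℂ) / 2 - ((k + 1 : ℕ) : ℂ)) := by
        push_cast; ring
      rw [harg, smul_smul, cc_succ]
      congr 1
      push_cast; ring


/-- The generating set `{(ad Y)ᵏ V : k ≤ n}`. -/
def Sgen (n : ℕ) : Set VF :=
  Set.range fun k : Fin (n + 1) =>
    ((LieAlgebra.ad ℂ VF (Yb 0)) ^ (k : ℕ)) (Vvf ((n : ℂ) / 2))

/-- Its span. -/
def Wn (n : ℕ) : Submodule ℂ VF := Submodule.span ℂ (Sgen n)

theorem gen_mem (n k : ℕ) (hk : k ≤ n) :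
    ((LieAlgebra.ad ℂ VF (Yb 0)) ^ k) (Vvf ((n : ℂ) / 2)) ∈ Wn n :=
  Submodule.subset_span ⟨⟨k, by omega⟩, rfl⟩

theorem adY_top (n : ℕ) :
    ((LieAlgebra.ad ℂ VF (Yb 0)) ^ (n + 1)) (Vvf ((n : ℂ) / 2)) = 0 := by
  rw [adY_pow, cc_top, zero_smul]

theorem lie_adY_pow (n k : ℕ) :
    ⁅Yb 0, ((LieAlgebra.ad ℂ VF (Yb 0)) ^ k) (Vvf ((n : ℂ) / 2))⁆
      = ((LieAlgebra.ad ℂ VF (Yb 0)) ^ (k + 1)) (Vvf ((n : ℂ) / 2)) := by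
  rw [pow_succ', Module.End.mul_apply, LieAlgebra.ad_apply]

theorem keyY (n k : ℕ) (hk : k ≤ n) :
    ⁅Yb 0, ((LieAlgebra.ad ℂ VF (Yb 0)) ^ k) (Vvf ((n : ℂ) / 2))⁆ ∈ Wn n := by
  rw [lie_adY_pow]
  rcases eq_or_lt_of_le hk with h | h
  · subst h; rw [adY_top]; exact Submodule.zero_mem _
  · exact gen_mem n (k + 1) (by omega)

theorem keyX (n k : ℕ) (hk : k ≤ n) :
    ⁅Xb, ((LieAlgebra.ad ℂ VF (Yb 0)) ^ k) (Vvf ((n : ℂ) / 2))⁆ ∈ Wn n := by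
  cases k with
  | zero =>
      rw [adY_pow, lie_smul, L2a, smul_zero]
      exact (Wn n).zero_mem
  | succ k =>
      have h : ⁅Xb, ((LieAlgebra.ad ℂ VF (Yb 0)) ^ (k + 1)) (Vvf ((n : ℂ) / 2))⁆
          = (((k : ℂ) + 1) * (((n : ℂ) - k) / 2))
              • ((LieAlgebra.ad ℂ VF (Yb 0)) ^ k) (Vvf ((n : ℂ) / 2)) := by
        rw [adY_pow n (k + 1), lie_smul, L2b, adY_pow n k]
        have harg : ((n : ℂ) / 2 - ((k + 1 : ℕ) : ℂ) + 1) = (n : ℂ) / 2 - (k : ℕ) := by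
          push_cast; ring
        rw [harg, smul_smul, smul_smul, cc_succ]
        congr 1
        push_cast; ring
      rw [h]
      exact (Wn n).smul_mem _ (gen_mem n k (by omega))

theorem keyH (n k : ℕ) (hk : k ≤ n) :
    ⁅Hb 0, ((LieAlgebra.ad ℂ VF (Yb 0)) ^ k) (Vvf ((n : ℂ) / 2))⁆ ∈ Wn n := by
  have h : ⁅Hb 0, ((LieAlgebra.ad ℂ VF (Yb 0)) ^ k) (Vvf ((n : ℂ) / 2))⁆
      = ((n : ℂ) / 2 - k) • ((LieAlgebra.ad ℂ VF (Yb 0)) ^ k) (Vvf ((n : ℂ) / 2)) := by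
    rw [L4, adY_pow, lie_smul, L3, smul_smul, smul_smul, mul_comm]
  rw [h]
  exact (Wn n).smul_mem _ (gen_mem n k hk)

theorem key_closed (n : ℕ) (g : VF)
    (hg : ∀ k ≤ n, ⁅g, ((LieAlgebra.ad ℂ VF (Yb 0)) ^ k) (Vvf ((n : ℂ) / 2))⁆ ∈ Wn n) :
    ∀ w ∈ Wn n, ⁅g, w⁆ ∈ Wn n := by
  intro w hw
  induction hw using Submodule.span_induction with
  | mem x hx =>
      obtain ⟨⟨k, hk⟩, rfl⟩ := hx
      exact hg k (by omega)
  | zero => rw [lie_zero]; exact (Wn n).zero_mem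
  | add x y hx hy ihx ihy => rw [lie_add]; exact (Wn n).add_mem ihx ihy
  | smul c x hx ihx => rw [lie_smul]; exact (Wn n).smul_mem c ihx

/-- The Lie subalgebra of vector fields preserving a submodule `W`. -/
def normSub (W : Submodule ℂ VF) : LieSubalgebra ℂ VF where
  carrier := {D : VF | ∀ w ∈ W, ⁅D, w⁆ ∈ W}
  add_mem' := by
    intro a b ha hb w hw
    rw [add_lie]; exact W.add_mem (ha w hw) (hb w hw)
  zero_mem' := by
    intro w hw
    rw [zero_lie]; exact W.zero_mem
  smul_mem' := by
    intro c a ha w hw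
    rw [smul_lie]; exact W.smul_mem c (ha w hw)
  lie_mem' := by
    intro a b ha hb w hw
    rw [lie_lie]; exact W.sub_mem (ha _ (hb w hw)) (hb _ (ha w hw))

theorem inv_closed (n : ℕ) : ∀ S ∈ typeII 0, ∀ w ∈ Wn n, ⁅S, w⁆ ∈ Wn n := by
  have hle : typeII 0 ≤ normSub (Wn n) := by
    apply LieSubalgebra.lieSpan_le.mpr
    intro g hg
    rcases hg with rfl | rfl | rfl
    · exact key_closed n Xb (fun k hk => keyX n k hk)
    · exact key_closed n (Yb 0) (fun k hk => keyY n k hk)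
    · exact key_closed n ⁅Xb, Yb 0⁆ (fun k hk => keyH n k hk)
  intro S hS
  exact hle hS

theorem mem_all (n : ℕ) (W' : Submodule ℂ VF)
    (h1 : Vvf ((n : ℂ) / 2) ∈ W')
    (h2 : ∀ S ∈ typeII 0, ∀ w ∈ W', ⁅S, w⁆ ∈ W') (k : ℕ) :
    ((LieAlgebra.ad ℂ VF (Yb 0)) ^ k) (Vvf ((n : ℂ) / 2)) ∈ W' := by
  induction k with
  | zero => rw [pow_zero, Module.End.one_apply]; exact h1
  | succ k ih =>
      rw [← lie_adY_pow]
      have hY : Yb 0 ∈ typeII 0 :=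
        LieSubalgebra.subset_lieSpan (by simp)
      exact h2 (Yb 0) hY _ ih

theorem smul_lie' (c : ℂ) (x y : VF) : ⁅c • x, y⁆ = c • ⁅x, y⁆ := by
  rw [← lie_skew, ← lie_skew x y, lie_smul, smul_neg]

theorem key_ab (n j k : ℕ) :
    ⁅((LieAlgebra.ad ℂ VF (Yb 0)) ^ j) (Vvf ((n : ℂ) / 2)),
      ((LieAlgebra.ad ℂ VF (Yb 0)) ^ k) (Vvf ((n : ℂ) / 2))⁆ = 0 := by
  rw [adY_pow, adY_pow, smul_lie', lie_smul, L5 _ _ _ _ (by push_cast; ring),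
    smul_zero, smul_zero]

theorem main (n : ℕ) :
    invSpan (typeII 0) (Vvf ((n : ℂ) / 2)) = Wn n ∧
    ∀ a ∈ Wn n, ∀ b ∈ Wn n, ⁅a, b⁆ = 0 := by
  constructor
  · apply le_antisymm
    · apply sInf_le
      refine ⟨?_, inv_closed n⟩
      have h0 : Vvf ((n : ℂ) / 2)
          = ((LieAlgebra.ad ℂ VF (Yb 0)) ^ 0) (Vvf ((n : ℂ) / 2)) := by
        rw [pow_zero, Module.End.one_apply]
      rw [h0]
      exact gen_mem n 0 (Nat.zero_le n)
    · apply le_sInf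
      intro W' hW'
      rw [Wn, Submodule.span_le]
      rintro x ⟨⟨k, hk⟩, rfl⟩
      exact mem_all n W' hW'.1 hW'.2 k
  · have inner : ∀ x ∈ Sgen n, ∀ b ∈ Wn n, ⁅x, b⁆ = 0 := by
      rintro x ⟨⟨j, hj⟩, rfl⟩ b hb
      induction hb using Submodule.span_induction with
      | mem y hy =>
          obtain ⟨⟨k, hk⟩, rfl⟩ := hy
          exact key_ab n j k
      | zero => exact lie_zero _
      | add y z hy hz ihy ihz => rw [lie_add, ihy, ihz, add_zero]
      | smul c y hy ihy => rw [lie_smul, ihy, smul_zero]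
    intro a ha
    induction ha using Submodule.span_induction with
    | mem x hx => exact inner x hx
    | zero => intro b hb; exact zero_lie _
    | add x y hx hy ihx ihy =>
        intro b hb
        rw [add_lie, ihx b hb, ihy b hb, add_zero]
    | smul c x hx ihx =>
        intro b hb
        rw [smul_lie', ihx b hb, smul_zero]

theorem statement_14' (n : ℕ) :
    invSpan (typeII 0) (Vvf ((n : ℂ) / 2))
        = Submodule.span ℂ (Set.range fun k : Fin (n + 1) =>
            ((LieAlgebra.ad ℂ VF (Yb 0)) ^ (k : ℕ)) (Vvf ((n : ℂ) / 2))) ∧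
    ∀ a ∈ invSpan (typeII 0) (Vvf ((n : ℂ) / 2)),
      ∀ b ∈ invSpan (typeII 0) (Vvf ((n : ℂ) / 2)), ⁅a, b⁆ = 0 := by
  obtain ⟨h1, h2⟩ := main n
  refine ⟨h1, ?_⟩
  intro a ha b hb
  rw [h1] at ha hb
  exact h2 a ha b hb


/-- For the type (II)₀ realization, `2d` a nonnegative integer and
`V = exp(dx)(∂ₓ + y∂_y)`, the invariant subspace generated by `V` is the span of
`(ad Y)ⁿ(V)` for `0 ≤ n ≤ 2d`, and it is an abelian Lie subalgebra of `V(ℂ²)`. -/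
theorem statement_14 (n : ℕ) :
    invSpan (typeII 0) (Vvf ((n : ℂ) / 2))
        = Submodule.span ℂ (Set.range fun k : Fin (n + 1) =>
            ((LieAlgebra.ad ℂ VF (Yb 0)) ^ (k : ℕ)) (Vvf ((n : ℂ) / 2))) ∧
    ∀ a ∈ invSpan (typeII 0) (Vvf ((n : ℂ) / 2)),
      ∀ b ∈ invSpan (typeII 0) (Vvf ((n : ℂ) / 2)), ⁅a, b⁆ = 0 := by
  exact statement_14' n
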